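/- In the triplication table Σ_p built from a starter T of order p, for every c ∈ Z_p with c ≠ 0, the value c occurs exactly 3 times among all entries of Σ_p, and the value 0 occurs exactly 2 times. -/
import Mathlib


/-- `a`, `b` list the first/second elements of the pairs of a pairing in `ZMod n`.
`IsStarter n a b` says: the pairs partition `ZMod n \ {0}` (all entries distinct,
and the entries cover exactly the nonzero elements), and the differences
`±(a i - b i)` are all distinct and cover `ZMod n \ {0}`. -/
def IsStarter (n : ℕ) {ι : Type} (a b : ι → ZMod n) : Prop :=
  Function.Injective (fun z : ι × Bool => if z.2 then a z.1 else b z.1) ∧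
  Set.range a ∪ Set.range b = {x : ZMod n | x ≠ 0} ∧
  Function.Injective (fun z : ι × Bool => if z.2 then a z.1 - b z.1 else b z.1 - a z.1) ∧
  {d : ZMod n | ∃ i, d = a i - b i ∨ d = b i - a i} = {x : ZMod n | x ≠ 0}

/-- A strong starter: a starter whose pair sums `a i + b i` are all distinct and nonzero. -/
def IsStrongStarter (n : ℕ) {ι : Type} (a b : ι → ZMod n) : Prop :=
  IsStarter n a b ∧
  Function.Injective (fun i => a i + b i) ∧
  ∀ i, a i + b i ≠ 0

/-- The triplication table `Σ_p` (as a flat list of ordered pairs): the top pair `(t,t)`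
followed, for each `i`, by the row `(x i, y i), (t + x i, t + y i), (t - y i, t - x i)`. -/
def tripPairs {p q : ℕ} (x y : Fin q → ZMod p) (t : ZMod p) : List (ZMod p × ZMod p) :=
  (t, t) :: (List.finRange q).flatMap
    (fun i => [(x i, y i), (t + x i, t + y i), (t - y i, t - x i)])

/-- Monochrome sets: in the triplication table built from a starter `T`, every nonzero
value `c` occurs exactly 3 times among the entries, and `0` occurs exactly 2 times. -/
theorem trip_monochrome_counts (p q : ℕ) (hp : p = 2 * q + 1) (hodd : Odd p)
    (x y : Fin q → ZMod p) (hT : IsStarter p x y) (t : ZMod p) :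
    (∀ c : ZMod p, c ≠ 0 →
      (((tripPairs x y t).flatMap (fun uv => [uv.1, uv.2])).count c = 3)) ∧
    ((tripPairs x y t).flatMap (fun uv => [uv.1, uv.2])).count 0 = 2 := by
  classical
  obtain ⟨hinj, hrange, -, -⟩ := hT
  set f : Fin q × Bool → ZMod p := fun z => if z.2 then x z.1 else y z.1 with hf
  have key : ∀ c : ZMod p,
      (∑ i : Fin q, ((if x i = c then 1 else 0) + (if y i = c then 1 else 0)) : ℕ)
        = if c = 0 then 0 else 1 := by
    intro c
    have h1 : (∑ i : Fin q, ((if x i = c then 1 else 0) + (if y i = c then 1 else 0)) : ℕ)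
        = ∑ z : Fin q × Bool, if f z = c then 1 else 0 := by
      rw [Fintype.sum_prod_type]
      refine Finset.sum_congr rfl fun i _ => ?_
      rw [Fintype.sum_bool]
      simp only [hf]
      simp [add_comm]
    rw [h1, ← Finset.card_filter]
    by_cases hc : c = 0
    · subst hc
      simp only [if_true]
      rw [Finset.card_eq_zero]
      ext z
      simp only [Finset.mem_filter, Finset.mem_univ, true_and, Finset.notMem_empty,
        iff_false]
      intro h
      have : f z ∈ Set.range x ∪ Set.range y := by
        rcases z with ⟨i, b⟩
        cases b
        · exact Or.inr ⟨i, by simp [hf]⟩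
        · exact Or.inl ⟨i, by simp [hf]⟩
      rw [hrange] at this
      exact this h
    · rw [if_neg hc, Finset.card_eq_one]
      have : c ∈ Set.range x ∪ Set.range y := by rw [hrange]; exact hc
      obtain ⟨z₀, hz₀⟩ : ∃ z, f z = c := by
        rcases this with ⟨i, hi⟩ | ⟨i, hi⟩
        · exact ⟨(i, true), by simpa [hf] using hi⟩
        · exact ⟨(i, false), by simpa [hf] using hi⟩
      refine ⟨z₀, ?_⟩
      ext z
      simp only [Finset.mem_filter, Finset.mem_univ, true_and, Finset.mem_singleton]
      constructor
      · intro h; exact hinj (h.trans hz₀.symm)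
      · rintro rfl; exact hz₀
  have main : ∀ c : ZMod p,
      ((tripPairs x y t).flatMap (fun uv => [uv.1, uv.2])).count c
        = (if t = c then 2 else 0)
          + ((if c = 0 then 0 else 1) + (if c - t = 0 then 0 else 1)
             + (if t - c = 0 then 0 else 1)) := by
    intro c
    rw [tripPairs]
    rw [List.flatMap_cons, List.count_append, List.flatMap_assoc]
    congr 1
    · simp [List.count_cons]
      split <;> rfl
    · rw [List.count_flatMap, ← Fin.sum_univ_def, ← key c, ← key (c - t), ← key (t - c),
        ← Finset.sum_add_distrib, ← Finset.sum_add_distrib]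
      refine Finset.sum_congr rfl fun i _ => ?_
      have e1 : (t + x i = c) ↔ (x i = c - t) := by
        rw [eq_sub_iff_add_eq, add_comm]
      have e2 : (t + y i = c) ↔ (y i = c - t) := by
        rw [eq_sub_iff_add_eq, add_comm]
      have e3 : (t - y i = c) ↔ (y i = t - c) := by
        rw [sub_eq_iff_eq_add, eq_sub_iff_add_eq, add_comm, eq_comm]
      have e4 : (t - x i = c) ↔ (x i = t - c) := by
        rw [sub_eq_iff_eq_add, eq_sub_iff_add_eq, add_comm, eq_comm]
      simp only [Function.comp, List.flatMap_cons, List.flatMap_nil, List.append_nil,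
        List.cons_append, List.nil_append, List.count_cons, List.count_nil, beq_iff_eq,
        e1, e2, e3, e4]
      split_ifs <;> omega
  constructor
  · intro c hc
    rw [main c]
    by_cases hct : t = c
    · subst hct; simp [hc]
    · have h1 : c - t ≠ 0 := sub_ne_zero.mpr (Ne.symm hct)
      have h2 : t - c ≠ 0 := sub_ne_zero.mpr hct
      simp [hct, hc, h1, h2]
  · rw [main 0]
    by_cases ht : t = 0
    · subst ht; simp
    · have h1 : (0 : ZMod p) - t ≠ 0 := by simpa using ht
      have h2 : t - 0 ≠ 0 := by simpa using ht
      simp [ht, h1, h2]
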